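/- Let G₂ be a Carnot group such that the pair (ℝ, G₂) has the C¹_H extension property, and let G₂′ be another Carnot group such that (ℝ, G₂′) has the C¹_H extension property. Then the product Carnot group G₂ × G₂′ is such that (ℝ, G₂ × G₂′) has the C¹_H extension property. -/

import Mathlib

open Filter Topology Set Metric

section

variable (G : Type*) [Group G] [MetricSpace G]
variable (H : Type*) [NormedAddCommGroup H] [NormedSpace ℝ H]

/-- `γ` is a curve of class `C¹_H` on `s` with (horizontal) velocity `γ'`. -/
def IsC1H (expMap : H → G) (γ : ℝ → G) (γ' : ℝ → H) (s : Set ℝ) : Prop :=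
  ContinuousOn γ s ∧ ContinuousOn γ' s ∧
    ∀ t ∈ s, Tendsto (fun u => dist (γ u) (γ t * expMap ((u - t) • γ' t)) / |u - t|)
      (𝓝[s \ {t}] t) (𝓝 0)

/-- The `C¹_H`-Whitney condition for `(f, X)` on a closed set `K ⊆ ℝ`: `X` is continuous
on `K` and on every compact subset the first-order Taylor remainder is `o(|t-τ|)`. -/
def WhitneyCond (expMap : H → G) (f : ℝ → G) (X : ℝ → H) (K : Set ℝ) : Prop :=
  ContinuousOn X K ∧
    ∀ K' ⊆ K, IsCompact K' →
      ∃ ω : ℝ → ℝ, Tendsto (fun h => ω h / h) (𝓝[>] (0:ℝ)) (𝓝 0) ∧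
        ∀ t ∈ K', ∀ τ ∈ K', dist (f t) (f τ * expMap ((t - τ) • X τ)) ≤ ω |t - τ|

/-- The pair `(ℝ, G)` has the `C¹_H` extension property: every pair `(f, X)` satisfying
the `C¹_H`-Whitney condition on a closed set `K₀ ⊆ ℝ` extends to a globally defined
horizontal `C¹` curve with the prescribed derivative on `K₀`. -/
def ExtensionProperty (expMap : H → G) : Prop :=
  ∀ K₀ : Set ℝ, IsClosed K₀ → ∀ (f : ℝ → G) (X : ℝ → H),
    WhitneyCond G H expMap f X K₀ →
      ∃ (fbar : ℝ → G) (Xbar : ℝ → H),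
        IsC1H G H expMap fbar Xbar univ ∧ EqOn fbar f K₀ ∧ EqOn Xbar X K₀

end

/-- **Products preserve the `C¹_H` extension property.** If `(ℝ, G₂)` and `(ℝ, G₂′)`
have the `C¹_H` extension property, then so does `(ℝ, G₂ × G₂′)`, where the product
Carnot group carries the componentwise structure and `exp(v, v') = (exp v, exp v')`. -/
theorem extensionProperty_prod
    {G : Type*} [Group G] [MetricSpace G]
    {H : Type*} [NormedAddCommGroup H] [NormedSpace ℝ H]
    {G' : Type*} [Group G'] [MetricSpace G']
    {H' : Type*} [NormedAddCommGroup H'] [NormedSpace ℝ H']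
    (expMap : H → G) (expMap' : H' → G')
    (hG : ExtensionProperty G H expMap) (hG' : ExtensionProperty G' H' expMap') :
    ExtensionProperty (G × G') (H × H') (fun v => (expMap v.1, expMap' v.2)) := by
  intro K₀ hK₀ f X hW
  obtain ⟨hXc, hRem⟩ := hW
  -- Whitney condition for first component
  have hW1 : WhitneyCond G H expMap (fun t => (f t).1) (fun t => (X t).1) K₀ := by
    refine ⟨(continuous_fst.comp_continuousOn hXc), ?_⟩
    intro K' hK' hKc
    obtain ⟨ω, hω, hωb⟩ := hRem K' hK' hKc
    refine ⟨ω, hω, fun t ht τ hτ => ?_⟩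
    calc dist (f t).1 ((f τ).1 * expMap ((t - τ) • (X τ).1))
        ≤ dist (f t) (f τ * (expMap ((t - τ) • X τ).1, expMap' ((t - τ) • X τ).2)) := by
          rw [Prod.dist_eq]; exact le_max_left _ _
      _ ≤ ω |t - τ| := hωb t ht τ hτ
  have hW2 : WhitneyCond G' H' expMap' (fun t => (f t).2) (fun t => (X t).2) K₀ := by
    refine ⟨(continuous_snd.comp_continuousOn hXc), ?_⟩
    intro K' hK' hKc
    obtain ⟨ω, hω, hωb⟩ := hRem K' hK' hKc
    refine ⟨ω, hω, fun t ht τ hτ => ?_⟩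
    calc dist (f t).2 ((f τ).2 * expMap' ((t - τ) • (X τ).2))
        ≤ dist (f t) (f τ * (expMap ((t - τ) • X τ).1, expMap' ((t - τ) • X τ).2)) := by
          rw [Prod.dist_eq]; exact le_max_right _ _
      _ ≤ ω |t - τ| := hωb t ht τ hτ
  obtain ⟨f1, X1, ⟨hf1c, hX1c, hf1d⟩, hf1eq, hX1eq⟩ := hG K₀ hK₀ _ _ hW1
  obtain ⟨f2, X2, ⟨hf2c, hX2c, hf2d⟩, hf2eq, hX2eq⟩ := hG' K₀ hK₀ _ _ hW2
  refine ⟨fun t => (f1 t, f2 t), fun t => (X1 t, X2 t), ⟨hf1c.prodMk hf2c, hX1c.prodMk hX2c, ?_⟩,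
    fun t ht => Prod.ext (hf1eq ht) (hf2eq ht), fun t ht => Prod.ext (hX1eq ht) (hX2eq ht)⟩
  intro t ht
  have h1 := hf1d t ht
  have h2 := hf2d t ht
  have hne : ∀ᶠ u in 𝓝[univ \ {t}] t, u ≠ t := by
    filter_upwards [self_mem_nhdsWithin] with u hu using hu.2
  refine tendsto_of_tendsto_of_tendsto_of_le_of_le' tendsto_const_nhds
    (by simpa using h1.add h2) ?_ ?_
  · filter_upwards with u using div_nonneg dist_nonneg (abs_nonneg _)
  · filter_upwards [hne] with u hu
    have hpos : 0 < |u - t| := abs_pos.mpr (sub_ne_zero.mpr hu)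
    rw [← add_div]
    apply div_le_div_of_nonneg_right ?_ hpos.le |>.trans_eq rfl
    rw [Prod.dist_eq]
    exact max_le_add_of_nonneg dist_nonneg dist_nonneg
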